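/- arXiv:1503.02742 — 2 statements merged into one kernel-verified Lean document; each statement's English description precedes it below -/
import Mathlib

section
/- There exists a unique basis {H̱_w : w ∈ W} of the Hecke algebra H as a Z[v,v⁻¹]-module satisfying d(H̱_w) = H̱_w and H̱_w = H_w + Σ_{x < w} h_{x,w} H_x, where each h_{x,w} lies in vZ[v] and < is the Bruhat order on W. -/
/-!
# Statement 0: Existence and uniqueness of the Kazhdan–Lusztig basis

Let `(W,S)` be a Coxeter system with Bruhat order `<`, and let `H` be its Hecke
algebra over `ℤ[v,v⁻¹]` with standard basis `{H_w}` and bar involution `d`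
(`d(v) = v⁻¹`, `d(H_w) = (H_{w⁻¹})⁻¹`).  Then there exists a unique basis
`{H̱_w}` of `H` as a `ℤ[v,v⁻¹]`-module such that `d(H̱_w) = H̱_w` and
`H̱_w = H_w + Σ_{x < w} h_{x,w} H_x` with `h_{x,w} ∈ v ℤ[v]`.
-/

open LaurentPolynomial

/-- The Bruhat order on a Coxeter group, defined via the subword property:
`x ≤ w` iff some reduced word for `w` contains a reduced word for `x` as a
(not necessarily contiguous) subword. -/
def CoxeterSystem.bruhatLE {B W : Type} [Group W] {M : CoxeterMatrix B}
    (cs : CoxeterSystem M W) (x w : W) : Prop :=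
  ∃ ω : List B, cs.IsReduced ω ∧ cs.wordProd ω = w ∧
    ∃ φ : List B, φ.Sublist ω ∧ cs.IsReduced φ ∧ cs.wordProd φ = x

/-- The strict Bruhat order. -/
def CoxeterSystem.bruhatLT {B W : Type} [Group W] {M : CoxeterMatrix B}
    (cs : CoxeterSystem M W) (x w : W) : Prop :=
  cs.bruhatLE x w ∧ x ≠ w

open List
open scoped Classical

namespace KLaux

variable {B W : Type} [Group W] {M : CoxeterMatrix B} (cs : CoxeterSystem M W)

local prefix:100 "s" => cs.simple
local prefix:100 "π" => cs.wordProd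
local prefix:100 "ℓ" => cs.length

lemma conj_eq_iff {G : Type*} [Group G] (a x y : G) : a * x * a⁻¹ = y ↔ x = a⁻¹ * y * a := by
  constructor
  · rintro rfl; group
  · rintro rfl; group

/-- One generator of the reflection-sign representation. -/
noncomputable def sg (i : B) : Function.End (W × ℤˣ) :=
  fun p => (s i * p.1 * s i, if p.1 = s i then -p.2 else p.2)

lemma sg_apply (i : B) (t : W) (ε : ℤˣ) :
    sg cs i (t, ε) = (s i * t * s i, if t = s i then -ε else ε) := rfl

lemma sj_mul_pow (i j : B) (k : ℕ) :
    s j * (s i * s j) ^ k = ((s i * s j) ^ k)⁻¹ * s j := by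
  have h : s j * (s i * s j) * (s j)⁻¹ = (s i * s j)⁻¹ := by
    rw [cs.inv_simple, mul_inv_rev, cs.inv_simple, cs.inv_simple]
    calc s j * (s i * s j) * s j = s j * s i * (s j * s j) := by group
      _ = s j * s i := by rw [cs.simple_mul_simple_self]; group
  have h2 : s j * (s i * s j) ^ k * (s j)⁻¹ = ((s i * s j) ^ k)⁻¹ := by
    rw [← conj_pow, h, inv_pow]
  calc s j * (s i * s j) ^ k = (s j * (s i * s j) ^ k * (s j)⁻¹) * s j := by group
    _ = ((s i * s j) ^ k)⁻¹ * s j := by rw [h2]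

lemma sg_pow (i j : B) (k : ℕ) (t : W) (ε : ℤˣ) :
    ((sg cs i * sg cs j) ^ k) (t, ε) =
      ((s i * s j) ^ k * t * ((s i * s j) ^ k)⁻¹,
        (∏ m ∈ Finset.range (2 * k),
          (if t = ((s i * s j) ^ m)⁻¹ * s j then (-1 : ℤˣ) else 1)) * ε) := by
  induction k with
  | zero =>
    rw [pow_zero]
    show (t, ε) = _
    simp
  | succ k ih =>
    have key : ((sg cs i * sg cs j) ^ (k+1)) (t, ε)
        = (sg cs i) ((sg cs j) (((sg cs i * sg cs j) ^ k) (t, ε))) := by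
      rw [pow_succ']
      rfl
    set c : W := s i * s j with hc
    set P : ℤˣ := ∏ m ∈ Finset.range (2 * k),
          (if t = (c ^ m)⁻¹ * s j then (-1 : ℤˣ) else 1) with hP
    rw [key, ih, sg_apply, sg_apply]
    have hsj : ∀ n : ℕ, s j * c ^ n = (c ^ n)⁻¹ * s j := fun n => sj_mul_pow cs i j n
    -- the two flip conditions
    have e2k : (c ^ k)⁻¹ * s j * c ^ k = (c ^ (2*k))⁻¹ * s j := by
      rw [mul_assoc, hsj k, two_mul, pow_add, mul_inv_rev, mul_assoc]
    have hcond1 : (c ^ k * t * (c ^ k)⁻¹ = s j) ↔ (t = (c ^ (2*k))⁻¹ * s j) := by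
      rw [conj_eq_iff, e2k]
    have e2k1 : (c ^ k)⁻¹ * (s j * s i * s j) * c ^ k = (c ^ (2*k+1))⁻¹ * s j := by
      have hsjs : s j * s i * s j = c⁻¹ * s j := by
        rw [hc, mul_inv_rev, cs.inv_simple, cs.inv_simple]
      rw [hsjs]
      calc (c ^ k)⁻¹ * (c⁻¹ * s j) * c ^ k = (c^k)⁻¹ * c⁻¹ * (s j * c ^ k) := by group
        _ = (c^k)⁻¹ * c⁻¹ * ((c ^ k)⁻¹ * s j) := by rw [hsj k]
        _ = ((c ^ k * c) * c ^ k)⁻¹ * s j := by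
            simp [mul_inv_rev, mul_assoc]
        _ = (c ^ (2*k+1))⁻¹ * s j := by
            have : c ^ (2*k+1) = c ^ k * c * c ^ k := by
              rw [two_mul, pow_add, pow_add, pow_one]; group
            rw [this]
    have hcond2 : (s j * (c ^ k * t * (c ^ k)⁻¹) * s j = s i)
        ↔ (t = (c ^ (2*k+1))⁻¹ * s j) := by
      have hstep : s j * (c ^ k * t * (c ^ k)⁻¹) * s j = s i
          ↔ c ^ k * t * (c ^ k)⁻¹ = s j * s i * s j := by
        constructor
        · intro h
          rw [← h]
          symm
          calc s j * (s j * (c ^ k * t * (c ^ k)⁻¹) * s j) * s j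
              = (s j * s j) * (c ^ k * t * (c ^ k)⁻¹) * (s j * s j) := by group
            _ = c ^ k * t * (c ^ k)⁻¹ := by rw [cs.simple_mul_simple_self]; group
        · intro h
          rw [h]
          calc s j * (s j * s i * s j) * s j
              = (s j * s j) * s i * (s j * s j) := by group
            _ = s i := by rw [cs.simple_mul_simple_self]; group
      rw [hstep, conj_eq_iff, e2k1]
    -- components
    refine Prod.ext ?_ ?_
    · show s i * (s j * (c ^ k * t * (c ^ k)⁻¹) * s j) * s i = c ^ (k+1) * t * (c ^ (k+1))⁻¹
      rw [pow_succ' c k, mul_inv_rev, hc, mul_inv_rev, cs.inv_simple, cs.inv_simple]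
      group
    · show (if s j * (c ^ k * t * (c ^ k)⁻¹) * s j = s i then
          -(if c ^ k * t * (c ^ k)⁻¹ = s j then -(P * ε) else P * ε)
          else (if c ^ k * t * (c ^ k)⁻¹ = s j then -(P * ε) else P * ε)) = _
      rw [if_congr hcond2 rfl rfl, if_congr hcond1 rfl rfl]
      have hsplit : (∏ m ∈ Finset.range (2 * (k+1)),
          (if t = (c ^ m)⁻¹ * s j then (-1 : ℤˣ) else 1))
          = P * (if t = (c ^ (2*k))⁻¹ * s j then (-1 : ℤˣ) else 1)
              * (if t = (c ^ (2*k+1))⁻¹ * s j then (-1 : ℤˣ) else 1) := by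
        have h22 : 2 * (k+1) = (2*k + 1) + 1 := by ring
        rw [h22, Finset.prod_range_succ, Finset.prod_range_succ, hP]
      rw [hsplit]
      by_cases h1 : t = (c ^ (2*k))⁻¹ * s j <;> by_cases h2 : t = (c ^ (2*k+1))⁻¹ * s j
      · rw [if_pos h1, if_pos h2, if_pos h1, if_pos h2]
        simp [mul_comm]
      · rw [if_pos h1, if_neg h2, if_pos h1, if_neg h2]
        simp [mul_comm]
      · rw [if_neg h1, if_pos h2, if_neg h1, if_pos h2]
        simp [mul_comm]
      · rw [if_neg h1, if_neg h2, if_neg h1, if_neg h2]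
        simp [mul_comm]

end KLaux

namespace KLaux2

open KLaux List

variable {B W : Type} [Group W] {M : CoxeterMatrix B} (cs : CoxeterSystem M W)

local prefix:100 "s" => cs.simple
local prefix:100 "π" => cs.wordProd
local prefix:100 "ℓ" => cs.length

lemma liftable : M.IsLiftable (fun i => sg cs i) := by
  intro i j
  show ((sg cs i * sg cs j) ^ M i j) = (1 : Function.End (W × ℤˣ))
  funext p
  obtain ⟨t, ε⟩ := p
  rw [sg_pow]
  have hM : (s i * s j) ^ (M i j) = 1 := cs.simple_mul_simple_pow i j
  have hsign : (∏ m ∈ Finset.range (2 * M i j),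
      (if t = ((s i * s j) ^ m)⁻¹ * s j then (-1 : ℤˣ) else 1)) = 1 := by
    have h2 : 2 * M i j = M i j + M i j := by ring
    rw [h2, Finset.prod_range_add]
    have : ∀ m, (if t = ((s i * s j) ^ (M i j + m))⁻¹ * s j then (-1 : ℤˣ) else 1)
        = (if t = ((s i * s j) ^ m)⁻¹ * s j then (-1 : ℤˣ) else 1) := by
      intro m
      rw [pow_add, hM, one_mul]
    rw [Finset.prod_congr rfl (fun m _ => this m)]
    have : ∀ u : ℤˣ, u * u = 1 := fun u => Int.units_mul_self u
    exact this _
  rw [hM, hsign]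
  show _ = (t, ε)
  simp

noncomputable def rho : W →* Function.End (W × ℤˣ) := cs.lift ⟨fun i => sg cs i, liftable cs⟩

lemma rho_simple (i : B) : rho cs (s i) = sg cs i := cs.lift_apply_simple (liftable cs) i

/-- `-1` raised to the number of occurrences of `t` in `l`. -/
noncomputable def prodSgn (t : W) (l : List W) : ℤˣ :=
  (l.map (fun u => if t = u then (-1 : ℤˣ) else 1)).prod

lemma prodSgn_nil (t : W) : prodSgn (W := W) t [] = 1 := rfl

lemma prodSgn_cons (t a : W) (l : List W) :
    prodSgn t (a :: l) = (if t = a then (-1 : ℤˣ) else 1) * prodSgn t l := by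
  unfold prodSgn
  rw [List.map_cons, List.prod_cons]

lemma prodSgn_of_not_mem {t : W} {l : List W} (h : t ∉ l) : prodSgn t l = 1 := by
  induction l with
  | nil => rfl
  | cons a l ih =>
    rw [prodSgn_cons, if_neg (fun hc => h (by rw [hc]; exact List.mem_cons_self)),
      ih (fun hc => h (List.mem_cons_of_mem a hc)), one_mul]

lemma prodSgn_of_nodup_mem {t : W} {l : List W} (hnd : l.Nodup) (h : t ∈ l) :
    prodSgn t l = -1 := by
  induction l with
  | nil => exact absurd h List.not_mem_nil
  | cons a l ih =>
    rw [prodSgn_cons]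
    rcases List.mem_cons.mp h with rfl | hmem
    · rw [if_pos rfl, prodSgn_of_not_mem (List.nodup_cons.mp hnd).1, mul_one]
    · have hne : t ≠ a := fun hc => (List.nodup_cons.mp hnd).1 (hc ▸ hmem)
      rw [if_neg hne, ih (List.nodup_cons.mp hnd).2 hmem, one_mul]

lemma rho_word (ω : List B) (t : W) (ε : ℤˣ) :
    rho cs (π ω) (t, ε)
      = (π ω * t * (π ω)⁻¹, prodSgn t (cs.rightInvSeq ω) * ε) := by
  induction ω with
  | nil =>
    rw [cs.wordProd_nil, map_one]
    show (t, ε) = _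
    simp [prodSgn]
  | cons i ω ih =>
    rw [cs.wordProd_cons, map_mul]
    have happ : (rho cs (s i) * rho cs (π ω)) (t, ε)
        = rho cs (s i) (rho cs (π ω) (t, ε)) := rfl
    rw [happ, ih, rho_simple, sg_apply]
    have hris : cs.rightInvSeq (i :: ω) = ((π ω)⁻¹ * s i * π ω) :: cs.rightInvSeq ω := rfl
    rw [hris, prodSgn_cons]
    have hcond : (π ω * t * (π ω)⁻¹ = s i) ↔ ((π ω)⁻¹ * s i * π ω = t) := by
      rw [conj_eq_iff]
      constructor
      · intro h; rw [h]
      · intro h; rw [← h]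
    refine Prod.ext ?_ ?_
    · show s i * (π ω * t * (π ω)⁻¹) * s i = _
      rw [mul_inv_rev, cs.inv_simple]
      group
    · show (if π ω * t * (π ω)⁻¹ = s i then -(prodSgn t (cs.rightInvSeq ω) * ε)
          else prodSgn t (cs.rightInvSeq ω) * ε) = _
      have hcond' : (π ω * t * (π ω)⁻¹ = s i) ↔ (t = (π ω)⁻¹ * s i * π ω) :=
        hcond.trans eq_comm
      rw [if_congr hcond' rfl rfl]
      by_cases h : t = (π ω)⁻¹ * s i * π ω
      · rw [if_pos h, if_pos h]
        simp [mul_comm]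
      · rw [if_neg h, if_neg h]
        simp

/-- The sign of a "reflection" `t` in `w`. -/
noncomputable def eta (w t : W) : ℤˣ := (rho cs w (t, 1)).2

lemma rho_apply (w t : W) (ε : ℤˣ) :
    rho cs w (t, ε) = (w * t * w⁻¹, eta cs w t * ε) := by
  obtain ⟨ω, _, rfl⟩ := cs.exists_reduced_word' w
  rw [rho_word]
  unfold eta
  rw [rho_word]
  simp

lemma eta_eq_count (ω : List B) (t : W) :
    eta cs (π ω) t = prodSgn t (cs.rightInvSeq ω) := by
  unfold eta
  rw [rho_word]
  simp

lemma eta_reflection_self {t : W} (h : cs.IsReflection t) : eta cs t t = -1 := by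
  obtain ⟨q, j, rfl⟩ := h
  set t := q * s j * q⁻¹ with ht
  have e1 : rho cs q⁻¹ (t, 1) = (s j, eta cs q⁻¹ t) := by
    rw [rho_apply, mul_one]
    congr 1
    rw [ht]; group
  have e2 : ∀ ε : ℤˣ, rho cs (s j) (s j, ε) = (s j, -ε) := by
    intro ε
    rw [rho_simple, sg_apply, if_pos rfl]
    congr 1
    rw [cs.simple_mul_simple_self, one_mul]
  have e3 : ∀ ε : ℤˣ, rho cs q (s j, ε) = (t, eta cs q (s j) * ε) := by
    intro ε
    rw [rho_apply]
  have hunit : eta cs q (s j) * eta cs q⁻¹ t = 1 := by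
    have h1 : rho cs q (rho cs q⁻¹ (t, 1)) = (t, eta cs q (s j) * eta cs q⁻¹ t) := by
      rw [e1, e3]
    have h2 : rho cs q (rho cs q⁻¹ (t, 1)) = (t, 1) := by
      have : rho cs q * rho cs q⁻¹ = 1 := by
        rw [← map_mul, mul_inv_cancel, map_one]
      have happ : rho cs q (rho cs q⁻¹ (t, 1)) = (rho cs q * rho cs q⁻¹) (t, 1) := rfl
      rw [happ, this]
      rfl
    rw [h1] at h2
    exact (Prod.ext_iff.mp h2).2
  have main : rho cs t (t, 1) = (t, eta cs q (s j) * (-(eta cs q⁻¹ t))) := by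
    have hfact : rho cs t = rho cs q * (rho cs (s j) * rho cs q⁻¹) := by
      rw [← map_mul, ← map_mul, ht]
      congr 1
      group
    have happ : rho cs t (t, 1) = rho cs q (rho cs (s j) (rho cs q⁻¹ (t, 1))) := by
      rw [hfact]; rfl
    rw [happ, e1, e2, e3]
  unfold eta
  rw [main]
  show eta cs q (s j) * (-(eta cs q⁻¹ t)) = -1
  rw [mul_neg, hunit]

lemma eta_mul_reflection {t : W} (h : cs.IsReflection t) (w : W) :
    eta cs (w * t) t = - eta cs w t := by
  have happ : rho cs (w * t) (t, 1) = rho cs w (rho cs t (t, 1)) := by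
    rw [map_mul]; rfl
  have h1 : rho cs t (t, 1) = (t, -1) := by
    rw [rho_apply, mul_one, eta_reflection_self cs h]
    congr 1
    group
  unfold eta
  rw [happ, h1, rho_apply]
  simp
  rfl

lemma mem_ris_iff_eta {ω : List B} (hred : cs.IsReduced ω) (t : W) :
    t ∈ cs.rightInvSeq ω ↔ eta cs (π ω) t = -1 := by
  rw [eta_eq_count]
  constructor
  · intro h
    exact prodSgn_of_nodup_mem hred.nodup_rightInvSeq h
  · intro h
    by_contra hmem
    rw [prodSgn_of_not_mem hmem] at h
    exact absurd h (by decide)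

theorem exchange_right {ω : List B} (hred : cs.IsReduced ω) {t : W} (ht : cs.IsReflection t)
    (hl : ℓ (π ω * t) < ℓ (π ω)) :
    ∃ γ, γ.Sublist ω ∧ γ.length + 1 = ω.length ∧ π γ = π ω * t := by
  have hmem : t ∈ cs.rightInvSeq ω := by
    rw [mem_ris_iff_eta cs hred]
    obtain ⟨β, hβred, hv⟩ := cs.exists_reduced_word' (π ω * t)
    have hnot : t ∉ cs.rightInvSeq β := by
      intro hmem
      have h2 := (cs.isRightInversion_of_mem_rightInvSeq hβred hmem).2
      rw [← hv, mul_assoc, ht.mul_self, mul_one] at h2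
      omega
    have h1 : eta cs (π ω * t) t = 1 := by
      rw [hv, eta_eq_count, prodSgn_of_not_mem hnot]
    have h2 : π ω = (π ω * t) * t := by rw [mul_assoc, ht.mul_self, mul_one]
    rw [h2, eta_mul_reflection cs ht, h1]
  obtain ⟨j, hj, hget⟩ := List.mem_iff_getElem.mp hmem
  have hjlen : j < ω.length := by
    rwa [cs.length_rightInvSeq] at hj
  refine ⟨ω.eraseIdx j, List.eraseIdx_sublist ω j, List.length_eraseIdx_add_one hjlen, ?_⟩
  rw [← cs.wordProd_mul_getD_rightInvSeq ω j]
  congr 1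
  rw [← hget, List.getD_eq_getElem _ 1 hj]

theorem exchange_left {ω : List B} (hred : cs.IsReduced ω) {t : W} (ht : cs.IsReflection t)
    (hl : ℓ (t * π ω) < ℓ (π ω)) :
    ∃ γ, γ.Sublist ω ∧ γ.length + 1 = ω.length ∧ π γ = t * π ω := by
  have hred' : cs.IsReduced ω.reverse := (cs.isReduced_reverse_iff ω).mpr hred
  have h1 : π ω.reverse * t = (t * π ω)⁻¹ := by
    rw [cs.wordProd_reverse, mul_inv_rev, ht.inv]
  have hl' : ℓ (π ω.reverse * t) < ℓ (π ω.reverse) := by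
    rw [h1, cs.length_inv, cs.wordProd_reverse, cs.length_inv]
    exact hl
  obtain ⟨γ', hsub, hlen, hprod⟩ := exchange_right cs hred' ht hl'
  refine ⟨γ'.reverse, ?_, ?_, ?_⟩
  · have := hsub.reverse
    rwa [List.reverse_reverse] at this
  · rw [List.length_reverse, ← List.length_reverse (as := ω)]
    exact hlen
  · rw [cs.wordProd_reverse, hprod, h1, inv_inv]

theorem deletion : ∀ (ω : List B), ∃ φ, φ.Sublist ω ∧ cs.IsReduced φ ∧ π φ = π ω := by
  suffices h : ∀ (n : ℕ) (ω : List B), ω.length ≤ n →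
      ∃ φ, φ.Sublist ω ∧ cs.IsReduced φ ∧ π φ = π ω by
    exact fun ω => h ω.length ω le_rfl
  intro n
  induction n with
  | zero =>
    intro ω hω
    rw [Nat.le_zero, List.length_eq_zero_iff] at hω
    subst hω
    exact ⟨[], List.Sublist.refl _, by simp [CoxeterSystem.IsReduced], rfl⟩
  | succ n ih =>
    intro ω hω
    by_cases hred : cs.IsReduced ω
    · exact ⟨ω, List.Sublist.refl _, hred, rfl⟩
    match ω with
    | [] => exact absurd (by simp [CoxeterSystem.IsReduced]) hred
    | i :: α =>
      by_cases hα : cs.IsReduced α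
      · have hlen : ℓ (s i * π α) + 1 = ℓ (π α) := by
          rcases cs.length_simple_mul (π α) i with h | h
          · exfalso
            apply hred
            show ℓ (π (i :: α)) = (i :: α).length
            rw [cs.wordProd_cons, h, hα]
            simp
          · exact h
        obtain ⟨γ, hsub, hγlen, hγprod⟩ := exchange_left cs hα (cs.isReflection_simple i)
          (by omega)
        refine ⟨γ, hsub.trans (List.sublist_cons_self i α), ?_, ?_⟩
        · show ℓ (π γ) = γ.length
          rw [hγprod]
          have := hα
          unfold CoxeterSystem.IsReduced at this
          omega
        · rw [hγprod, cs.wordProd_cons]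
      · have hlb : α.length ≤ n := by
          simp at hω; omega
        obtain ⟨φ₁, hsub₁, hred₁, hprod₁⟩ := ih α hlb
        have hl1 : φ₁.length < α.length := by
          have h1 : ℓ (π α) ≤ α.length := cs.length_wordProd_le α
          have h2 : ℓ (π α) ≠ α.length := hα
          have h3 : φ₁.length = ℓ (π φ₁) := hred₁.symm
          rw [hprod₁] at h3
          omega
        have hlb2 : (i :: φ₁).length ≤ n := by
          simp
          omega
        obtain ⟨φ, hsub₂, hred₂, hprod₂⟩ := ih (i :: φ₁) hlb2
        refine ⟨φ, hsub₂.trans (List.cons_sublist_cons.mpr hsub₁), hred₂, ?_⟩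
        rw [hprod₂, cs.wordProd_cons, cs.wordProd_cons, hprod₁]

end KLaux2

namespace KLaux3

open KLaux KLaux2 List

variable {B W : Type} [Group W] {M : CoxeterMatrix B} (cs : CoxeterSystem M W)

local prefix:100 "s" => cs.simple
local prefix:100 "π" => cs.wordProd
local prefix:100 "ℓ" => cs.length

/-- One step of the Bruhat chain order. -/
def cstep (a b : W) : Prop := ∃ t, cs.IsReflection t ∧ a * t = b ∧ ℓ a < ℓ b

/-- The Bruhat order, defined via chains of reflections. -/
def cle (x w : W) : Prop := Relation.ReflTransGen (cstep cs) x w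

lemma cle_refl (x : W) : cle cs x x := Relation.ReflTransGen.refl

lemma cle_trans {x y z : W} (h1 : cle cs x y) (h2 : cle cs y z) : cle cs x z := h1.trans h2

lemma cle_length {x w : W} (h : cle cs x w) : ℓ x ≤ ℓ w := by
  induction h with
  | refl => exact le_rfl
  | tail _ step ih => obtain ⟨t, _, _, hlt⟩ := step; omega

lemma cle_length_lt {x w : W} (h : cle cs x w) (hne : x ≠ w) : ℓ x < ℓ w := by
  induction h with
  | refl => exact absurd rfl hne
  | tail hxb step ih =>
    obtain ⟨t, _, _, hlt⟩ := step
    have := cle_length cs hxb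
    omega

lemma cle_smul_self {i : B} {u : W} (h : ℓ (s i * u) = ℓ u + 1) : cle cs u (s i * u) := by
  apply Relation.ReflTransGen.single
  refine ⟨u⁻¹ * s i * u, ⟨u⁻¹, i, by rw [inv_inv]⟩, ?_, by omega⟩
  simp [mul_assoc]

lemma cle_demote {i : B} {x : W} (h : ℓ (s i * x) + 1 = ℓ x) : cle cs (s i * x) x := by
  apply Relation.ReflTransGen.single
  refine ⟨x⁻¹ * s i * x, ⟨x⁻¹, i, by rw [inv_inv]⟩, ?_, by omega⟩
  have h1 : s i * x * (x⁻¹ * s i * x) = s i * (s i * x) := by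
    simp [mul_assoc]
  rw [h1, cs.simple_mul_simple_cancel_left]

lemma cle_eq_of_length_le {x w : W} (h : cle cs x w) (hl : ℓ w ≤ ℓ x) : x = w := by
  by_contra hne
  exact absurd (cle_length_lt cs h hne) (by omega)

theorem subword_of_cle {x w : W} (h : cle cs x w) :
    ∀ ω : List B, cs.IsReduced ω → π ω = w →
      ∃ φ : List B, φ.Sublist ω ∧ cs.IsReduced φ ∧ π φ = x := by
  induction h using Relation.ReflTransGen.head_induction_on with
  | refl => exact fun ω hred hπ => ⟨ω, List.Sublist.refl ω, hred, hπ⟩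
  | head h' hc ih =>
    rename_i a c
    intro ω hred hπ
    obtain ⟨ψ, hψsub, hψred, hψπ⟩ := ih ω hred hπ
    obtain ⟨t, ht, hat, hlt⟩ := h'
    have hca : c * t = a := by rw [← hat, mul_assoc, ht.mul_self, mul_one]
    have hlen : ℓ (π ψ * t) < ℓ (π ψ) := by rw [hψπ, hca]; omega
    obtain ⟨γ, hγsub, _, hγπ⟩ := exchange_right cs hψred ht hlen
    obtain ⟨φ, hφsub, hφred, hφπ⟩ := deletion cs γ
    exact ⟨φ, (hφsub.trans hγsub).trans hψsub, hφred, by rw [hφπ, hγπ, hψπ, hca]⟩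

theorem key (n : ℕ) :
    (∀ ω : List B, cs.IsReduced ω → ω.length = n →
      ∀ φ : List B, φ.Sublist ω → cs.IsReduced φ → cle cs (π φ) (π ω))
    ∧ (∀ (i : B) (u : W), ℓ (s i * u) = ℓ u + 1 → ℓ u + 1 = n →
      ∀ x, cle cs x u → cle cs x (s i * u) ∧ cle cs (s i * x) (s i * u)) := by
  induction n using Nat.strong_induction_on with
  | _ n IH =>
  have hL : ∀ (i : B) (u : W), ℓ (s i * u) = ℓ u + 1 → ℓ u + 1 = n →
      ∀ x, cle cs x u → cle cs x (s i * u) ∧ cle cs (s i * x) (s i * u) := by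
    intro i u hsu hn x hx
    induction hx using Relation.ReflTransGen.head_induction_on with
    | refl => exact ⟨cle_smul_self cs hsu, cle_refl cs _⟩
    | head h' hc ih =>
      rename_i a c
      have hfst : cle cs a (s i * u) :=
        cle_trans cs (Relation.ReflTransGen.single h') ih.1
      refine ⟨hfst, ?_⟩
      obtain ⟨t, ht, hat, hlt⟩ := h'
      rcases cs.length_simple_mul a i with hup | hdown
      swap
      · -- ℓ (s i * a) + 1 = ℓ a
        exact cle_trans cs (cle_demote cs hdown) hfst
      · rcases cs.length_simple_mul c i with hcup | hcdown
        · -- both go up: single step from s i * a to s i * c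
          have hstep : cstep cs (s i * a) (s i * c) := by
            refine ⟨t, ht, by rw [mul_assoc, hat], ?_⟩
            have := cle_length cs hc
            omega
          exact cle_trans cs (Relation.ReflTransGen.single hstep) ih.2
        · -- ℓ (s i * c) + 1 = ℓ c
          obtain ⟨β, hβred, hβ⟩ := cs.exists_reduced_word' (s i * c)
          have hca : c * t = a := by rw [← hat, mul_assoc, ht.mul_self, mul_one]
          have hβlen : β.length = ℓ (s i * c) := by rw [hβ]; exact hβred.symm
          have hπic : π (i :: β) = c := by
            rw [cs.wordProd_cons, ← hβ, cs.simple_mul_simple_cancel_left]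
          have hicred : cs.IsReduced (i :: β) := by
            show ℓ (π (i :: β)) = _
            rw [hπic]
            simp only [List.length_cons]
            omega
          have hlexch : ℓ (π (i :: β) * t) < ℓ (π (i :: β)) := by
            rw [hπic, hca]; omega
          obtain ⟨γ, hγsub, hγlen2, hγπ⟩ := exchange_right cs hicred ht hlexch
          rw [hπic, hca] at hγπ
          have hcu := cle_length cs hc
          have hblt : β.length < n := by omega
          cases hγsub with
          | cons _ hsubβ =>
            -- γ <+ β, π γ = a
            obtain ⟨φ, hφsub, hφred, hφπ⟩ := deletion cs γ
            have h1 : cle cs (π φ) (π β) :=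
              (IH β.length hblt).1 β hβred rfl φ (hφsub.trans hsubβ) hφred
            rw [hφπ, hγπ, ← hβ] at h1
            -- lift: from cle a (s i * c) get cle (s i * a) c
            have hlev : ℓ (s i * (s i * c)) = ℓ (s i * c) + 1 := by
              rw [cs.simple_mul_simple_cancel_left]; omega
            have h2 := ((IH (ℓ (s i * c) + 1) (by omega)).2 i (s i * c) hlev rfl a h1).2
            rw [cs.simple_mul_simple_cancel_left] at h2
            exact cle_trans cs h2 ih.1
          | cons_cons _ hsubβ =>
            -- γ = i :: γ₁, π (i :: γ₁) = a
            rename_i γ₁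
            have hγ₁π : π γ₁ = s i * a := by
              have := hγπ
              rw [cs.wordProd_cons] at this
              rw [← this, cs.simple_mul_simple_cancel_left]
            obtain ⟨φ, hφsub, hφred, hφπ⟩ := deletion cs γ₁
            have h1 : cle cs (π φ) (π β) :=
              (IH β.length hblt).1 β hβred rfl φ (hφsub.trans hsubβ) hφred
            rw [hφπ, hγ₁π, ← hβ] at h1
            exact cle_trans cs h1 ih.2
  refine ⟨?_, hL⟩
  intro ω hred hlen φ hsub hφred
  cases ω with
  | nil =>
    have : φ = [] := List.sublist_nil.mp hsub
    subst this
    exact cle_refl cs _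
  | cons j α =>
    have hα : cs.IsReduced α := by
      have := hred.drop 1
      simpa using this
    have hlsj : ℓ (s j * π α) = ℓ (π α) + 1 := by
      have h1 : ℓ (π (j :: α)) = α.length + 1 := by
        rw [hred]; simp
      rw [cs.wordProd_cons] at h1
      have h2 : ℓ (π α) = α.length := hα
      omega
    have hαlen : α.length = n - 1 ∧ 1 ≤ n := by
      constructor
      · simp at hlen; omega
      · simp at hlen; omega
    cases hsub with
    | cons _ hsubα =>
      have h1 := (IH α.length (by omega)).1 α hα rfl φ (by assumption) hφred
      rw [cs.wordProd_cons]
      exact cle_trans cs h1 (cle_smul_self cs hlsj)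
    | cons_cons _ hsubα =>
      rename_i φ₁
      have hφ₁red : cs.IsReduced φ₁ := by
        have := hφred.drop 1
        simpa using this
      have h1 := (IH α.length (by omega)).1 α hα rfl φ₁ (by assumption) hφ₁red
      have h2 := (hL j (π α) hlsj (by have : ℓ (π α) = α.length := hα; omega) (π φ₁) h1).2
      rw [cs.wordProd_cons, cs.wordProd_cons]
      exact h2

theorem cle_mul_simple {i : B} {u : W} (h : ℓ (s i * u) = ℓ u + 1) {x : W} (hx : cle cs x u) :
    cle cs x (s i * u) ∧ cle cs (s i * x) (s i * u) :=
  (key cs (ℓ u + 1)).2 i u h rfl x hx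

end KLaux3

namespace KLaux4

open LaurentPolynomial

lemma T_mul_coeff (a : ℤ) (p : LaurentPolynomial ℤ) (n : ℤ) :
    ((T a * p : LaurentPolynomial ℤ)).coeff n = p.coeff (n - a) := by
  have h : (T a : LaurentPolynomial ℤ) = AddMonoidAlgebra.single a 1 := rfl
  rw [h, AddMonoidAlgebra.coeff_single_mul_apply, one_mul, neg_add_eq_sub]

lemma C_mul_coeff (a : ℤ) (p : LaurentPolynomial ℤ) (n : ℤ) :
    ((LaurentPolynomial.C a * p : LaurentPolynomial ℤ)).coeff n = a * p.coeff n := by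
  have h : (LaurentPolynomial.C a : LaurentPolynomial ℤ) = AddMonoidAlgebra.single 0 a := rfl
  rw [h, AddMonoidAlgebra.coeff_single_mul_apply, neg_zero, zero_add]

lemma one_coeff (n : ℤ) : (1 : LaurentPolynomial ℤ).coeff n = if n = 0 then 1 else 0 := by
  have h : (1 : LaurentPolynomial ℤ) = T 0 := T_zero.symm
  rw [h, T_apply]
  by_cases hn : n = 0
  · subst hn; simp
  · rw [if_neg hn, if_neg (fun hc => hn hc.symm)]

lemma invert_eq_self_pos (p : LaurentPolynomial ℤ) (hp : ∀ n : ℤ, n ≤ 0 → p.coeff n = 0)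
    (hinv : LaurentPolynomial.invert p = p) : p = 0 := by
  ext n
  show p.coeff n = 0
  rcases le_or_gt n 0 with h | h
  · exact hp n h
  · have h1 : (LaurentPolynomial.invert p).coeff n = p.coeff (-n) := invert_apply p n
    rw [hinv] at h1
    rw [h1]
    exact hp (-n) (by omega)

variable {B W : Type} [Group W] {M : CoxeterMatrix B} (cs : CoxeterSystem M W)

local prefix:100 "s" => cs.simple
local prefix:100 "ℓ" => cs.length

theorem reprMul (HH : Type) [Ring HH] [Algebra (LaurentPolynomial ℤ) HH]
    (Hb : Module.Basis W (LaurentPolynomial ℤ) HH)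
    (Hb_mul : ∀ (i : B) (u : W), cs.length (cs.simple i * u) = cs.length u + 1 →
      Hb (cs.simple i) * Hb u = Hb (cs.simple i * u))
    (Hb_mul' : ∀ (i : B) (u : W), cs.length (cs.simple i * u) + 1 = cs.length u →
      Hb (cs.simple i) * Hb u
        = Hb (cs.simple i * u) + ((T (-1) - T 1 : LaurentPolynomial ℤ)) • Hb u)
    (i : B) (E : HH) (z : W) :
    Hb.repr (Hb (s i) * E) z
      = Hb.repr E (s i * z)
        + (if ℓ (s i * z) < ℓ z then (T (-1) - T 1 : LaurentPolynomial ℤ) * Hb.repr E z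
           else 0) := by
  classical
  have key : ∀ x : W, Hb.repr (Hb (s i) * Hb x) z
      = Hb.repr (Hb x) (s i * z)
        + (if ℓ (s i * z) < ℓ z then (T (-1) - T 1 : LaurentPolynomial ℤ) * Hb.repr (Hb x) z
           else 0) := by
    intro x
    have hsz : s i * x = z ↔ x = s i * z := by
      constructor
      · intro h; rw [← h, cs.simple_mul_simple_cancel_left]
      · intro h; rw [h, cs.simple_mul_simple_cancel_left]
    rcases cs.length_simple_mul x i with hup | hdn
    · rw [Hb_mul i x hup]
      simp only [Module.Basis.repr_self, Finsupp.single_apply]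
      by_cases h1 : x = s i * z
      · rw [if_pos (hsz.mpr h1), if_pos h1]
        have hne : ¬ (x = z) := by
          intro h
          rw [h] at h1
          exact cs.length_simple_mul_ne z i (by rw [← h1])
        rw [if_neg hne, mul_zero]
        simp
      · rw [if_neg (fun hc => h1 (hsz.mp hc)), if_neg h1]
        by_cases h2 : x = z
        · subst h2
          have hcond : ¬ (ℓ (s i * x) < ℓ x) := by omega
          rw [if_neg hcond]
          simp
        · rw [if_neg h2, mul_zero]
          simp
    · rw [Hb_mul' i x hdn]
      simp only [map_add, map_smul, Finsupp.add_apply, Finsupp.smul_apply, Module.Basis.repr_self,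
        Finsupp.single_apply, smul_eq_mul]
      congr 1
      · by_cases h1 : x = s i * z
        · rw [if_pos (hsz.mpr h1), if_pos h1]
        · rw [if_neg (fun hc => h1 (hsz.mp hc)), if_neg h1]
      · by_cases h2 : x = z
        · subst h2
          have hcond : ℓ (s i * x) < ℓ x := by omega
          rw [if_pos hcond]
        · rw [if_neg h2, mul_zero]
          by_cases hcond : ℓ (s i * z) < ℓ z
          · rw [if_pos hcond]
          · rw [if_neg hcond]
  -- extend by linearity
  set_option maxHeartbeats 1000000 in
  have hlin : ∀ E : HH, Hb.repr (Hb (s i) * E) z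
      = Hb.repr E (s i * z)
        + (if ℓ (s i * z) < ℓ z then (T (-1) - T 1 : LaurentPolynomial ℤ) * Hb.repr E z
           else 0) := by
    have hmaps : ((Hb.coord z).comp (LinearMap.mulLeft (LaurentPolynomial ℤ) (Hb (s i))))
        = (Hb.coord (s i * z))
          + (if ℓ (s i * z) < ℓ z then (T (-1) - T 1 : LaurentPolynomial ℤ) else 0) • Hb.coord z := by
      apply Hb.ext
      intro x
      rw [LinearMap.comp_apply, LinearMap.mulLeft_apply, LinearMap.add_apply,
        LinearMap.smul_apply]
      rw [Module.Basis.coord_apply, Module.Basis.coord_apply, Module.Basis.coord_apply]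
      rw [key x]
      congr 1
      by_cases hcond : ℓ (s i * z) < ℓ z
      · rw [if_pos hcond, if_pos hcond, smul_eq_mul]
      · rw [if_neg hcond, if_neg hcond, zero_smul]
    intro E
    have h2 := congrArg (fun f => f E) hmaps
    simp only [LinearMap.comp_apply, LinearMap.mulLeft_apply, LinearMap.add_apply,
      LinearMap.smul_apply, Module.Basis.coord_apply, smul_eq_mul] at h2
    rw [h2]
    by_cases hcond : ℓ (s i * z) < ℓ z
    · rw [if_pos hcond, if_pos hcond]
    · rw [if_neg hcond, if_neg hcond, zero_mul]
  exact hlin E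

end KLaux4

namespace KLaux5

variable {B W : Type} [Group W] {M : CoxeterMatrix B} (cs : CoxeterSystem M W)

theorem bruhatLE_of_cle {x w : W} (h : KLaux3.cle cs x w) : cs.bruhatLE x w := by
  obtain ⟨ω, hred, hw⟩ := cs.exists_reduced_word' w
  obtain ⟨φ, h1, h2, h3⟩ := KLaux3.subword_of_cle cs h ω hred hw.symm
  exact ⟨ω, hred, hw.symm, φ, h1, h2, h3⟩

/-- The inductive invariant for the KL basis elements. -/
@[reducible] def GoodKL {HH : Type} [Ring HH] [Algebra (LaurentPolynomial ℤ) HH]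
    (Hb : Module.Basis W (LaurentPolynomial ℤ) HH) (d : HH →+* HH) (w : W) (Cw : HH) : Prop :=
  d Cw = Cw ∧ Hb.repr Cw w = 1 ∧ (∀ z, Hb.repr Cw z ≠ 0 → KLaux3.cle cs z w) ∧
  (∀ z, z ≠ w → ∀ n : ℤ, n ≤ 0 → (Hb.repr Cw z).coeff n = 0)

end KLaux5

set_option maxHeartbeats 4000000 in
theorem kazhdan_lusztig_basis_existence_and_uniqueness
    {B W : Type} [Group W] {M : CoxeterMatrix B} (cs : CoxeterSystem M W)
    -- the Hecke algebra of (W,S), a ℤ[v,v⁻¹]-algebra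
    (HH : Type) [Ring HH] [Algebra (LaurentPolynomial ℤ) HH]
    -- its standard basis {H_w : w ∈ W}
    (Hb : Module.Basis W (LaurentPolynomial ℤ) HH)
    (Hb_one : Hb 1 = 1)
    -- H_s H_u = H_{su} when l(su) = l(u) + 1  (so that H_w = H_{s₁} ⋯ H_{s_k}
    -- for any reduced expression w = s₁ ⋯ s_k)
    (Hb_mul : ∀ (i : B) (u : W), cs.length (cs.simple i * u) = cs.length u + 1 →
      Hb (cs.simple i) * Hb u = Hb (cs.simple i * u))
    -- H_s H_u = H_{su} + (v⁻¹ - v) H_u when l(su) = l(u) - 1; together with the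
    -- previous axiom this encodes the quadratic relations H_s² = (v⁻¹-v)H_s + 1
    (Hb_mul' : ∀ (i : B) (u : W), cs.length (cs.simple i * u) + 1 = cs.length u →
      Hb (cs.simple i) * Hb u
        = Hb (cs.simple i * u) + ((T (-1) - T 1 : LaurentPolynomial ℤ)) • Hb u)
    -- the bar involution d : H → H, a ring involution with d(v) = v⁻¹ ...
    (d : HH →+* HH)
    (d_invol : Function.Involutive d)
    (d_semilinear : ∀ (p : LaurentPolynomial ℤ) (a : HH),
      d (p • a) = (LaurentPolynomial.invert p) • d a)
    -- ... and d(H_w) = (H_{w⁻¹})⁻¹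
    (d_H : ∀ u : W, d (Hb u) * Hb u⁻¹ = 1 ∧ Hb u⁻¹ * d (Hb u) = 1) :
    -- There exists a unique family {H̱_w} which is a ℤ[v,v⁻¹]-basis of H,
    -- is d-invariant, and satisfies H̱_w = H_w + Σ_{x<w} h_{x,w} H_x with
    -- h_{x,w} ∈ v ℤ[v].
    ∃! C : W → HH,
      (∃ b : Module.Basis W (LaurentPolynomial ℤ) HH, ∀ u : W, b u = C u) ∧
      (∀ u : W, d (C u) = C u) ∧
      (∀ u : W, Hb.repr (C u) u = 1) ∧
      (∀ u x : W, x ≠ u → Hb.repr (C u) x ≠ 0 → cs.bruhatLT x u) ∧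
      (∀ u x : W, x ≠ u → ∀ n : ℤ, n ≤ 0 → (Hb.repr (C u) x).coeff n = 0) := by
  classical
  have hreprMul := KLaux4.reprMul cs HH Hb Hb_mul Hb_mul'
  -- d expanded on a general element
  have repr_d : ∀ (E : HH) (z : W), Hb.repr (d E) z
      = (Hb.repr E).sum
          (fun x c => (LaurentPolynomial.invert c) * Hb.repr (d (Hb x)) z) := by
    intro E z
    have h1 : d E = (Hb.repr E).sum
        (fun x c => (LaurentPolynomial.invert c) • d (Hb x)) := by
      conv_lhs => rw [← Hb.linearCombination_repr E]
      rw [Finsupp.linearCombination_apply, map_finsuppSum]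
      exact Finsupp.sum_congr (fun x hx => d_semilinear _ _)
    rw [h1, map_finsuppSum, Finsupp.sum_apply]
    exact Finsupp.sum_congr (fun x hx => by rw [map_smul, Finsupp.smul_apply, smul_eq_mul])
  -- d on the generators
  have d_Hs : ∀ i : B, d (Hb (cs.simple i))
      = Hb (cs.simple i) + (T 1 - T (-1) : LaurentPolynomial ℤ) • 1 := by
    intro i
    have hss : Hb (cs.simple i) * Hb (cs.simple i)
        = 1 + (T (-1) - T 1 : LaurentPolynomial ℤ) • Hb (cs.simple i) := by
      have hcond : cs.length (cs.simple i * cs.simple i) + 1 = cs.length (cs.simple i) := by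
        rw [cs.simple_mul_simple_self, cs.length_one, cs.length_simple]
      have := Hb_mul' i (cs.simple i) hcond
      rwa [cs.simple_mul_simple_self, Hb_one] at this
    have hXinv : Hb (cs.simple i)
        * (Hb (cs.simple i) + (T 1 - T (-1) : LaurentPolynomial ℤ) • 1) = 1 := by
      rw [mul_add, hss, mul_smul_comm, mul_one, add_assoc, ← add_smul]
      have : (T (-1) - T 1 + (T 1 - T (-1)) : LaurentPolynomial ℤ) = 0 := by ring
      rw [this, zero_smul, add_zero]
    have h1 : d (Hb (cs.simple i)) * Hb (cs.simple i) = 1 := by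
      have := (d_H (cs.simple i)).1
      rwa [cs.inv_simple] at this
    calc d (Hb (cs.simple i))
        = d (Hb (cs.simple i)) * (Hb (cs.simple i)
            * (Hb (cs.simple i) + (T 1 - T (-1) : LaurentPolynomial ℤ) • 1)) := by
          rw [hXinv, mul_one]
      _ = (d (Hb (cs.simple i)) * Hb (cs.simple i))
            * (Hb (cs.simple i) + (T 1 - T (-1) : LaurentPolynomial ℤ) • 1) := by
          rw [mul_assoc]
      _ = _ := by rw [h1, one_mul]
  -- triangularity of d on the standard basis
  have stepA : ∀ w : W, Hb.repr (d (Hb w)) w = 1 ∧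
      (∀ z : W, Hb.repr (d (Hb w)) z ≠ 0 → z = w ∨ cs.length z < cs.length w) := by
    suffices h : ∀ (n : ℕ) (w : W), cs.length w = n → (Hb.repr (d (Hb w)) w = 1 ∧
        (∀ z : W, Hb.repr (d (Hb w)) z ≠ 0 → z = w ∨ cs.length z < cs.length w)) from
      fun w => h _ w rfl
    intro n
    induction n using Nat.strong_induction_on with
    | _ n IHn =>
    intro w hw
    rcases Nat.eq_zero_or_pos n with hn | hn
    · subst hn
      have hw1 : w = 1 := cs.length_eq_zero_iff.mp hw
      subst hw1
      have hd1 : d (Hb 1) = Hb 1 := by rw [Hb_one, map_one]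
      constructor
      · rw [hd1, Hb.repr_self, Finsupp.single_apply, if_pos rfl]
      · intro z hz
        left
        by_contra hne
        rw [hd1, Hb.repr_self, Finsupp.single_apply, if_neg (fun h => hne h.symm)] at hz
        exact hz rfl
    · have hwne : w ≠ 1 := by
        intro h
        rw [h, cs.length_one] at hw
        omega
      obtain ⟨i, hdesc⟩ := cs.exists_leftDescent_of_ne_one hwne
      set u : W := cs.simple i * w with hu
      have hsw : cs.simple i * u = w := by rw [hu, cs.simple_mul_simple_cancel_left]
      have hlu : cs.length u + 1 = cs.length w := by
        rcases cs.length_simple_mul u i with h1 | h1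
        · rw [hsw] at h1; omega
        · rw [hsw] at h1
          have : cs.length u < cs.length w := hdesc
          omega
      have hDu := IHn (cs.length u) (by omega) u rfl
      have hfact : d (Hb w) = Hb (cs.simple i) * d (Hb u)
          + (T 1 - T (-1) : LaurentPolynomial ℤ) • d (Hb u) := by
        rw [← hsw, ← Hb_mul i u (by rw [hsw]; omega), map_mul, d_Hs i, add_mul, smul_mul_assoc, one_mul]
      have hcoeff : ∀ z : W, Hb.repr (d (Hb w)) z
          = Hb.repr (d (Hb u)) (cs.simple i * z)
            + (if cs.length (cs.simple i * z) < cs.length z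
               then (T (-1) - T 1 : LaurentPolynomial ℤ) * Hb.repr (d (Hb u)) z else 0)
            + (T 1 - T (-1) : LaurentPolynomial ℤ) * Hb.repr (d (Hb u)) z := by
        intro z
        rw [hfact, map_add, map_smul, Finsupp.add_apply, Finsupp.smul_apply, smul_eq_mul,
          hreprMul i (d (Hb u)) z]
      constructor
      · rw [hcoeff w]
        have h1 : cs.simple i * w = u := hu.symm
        have h2 : Hb.repr (d (Hb u)) w = 0 := by
          by_contra hne
          rcases hDu.2 w hne with h | h
          · rw [h] at hlu; omega
          · omega
        rw [h1, hDu.1, h2, mul_zero, mul_zero, add_zero]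
        by_cases hcond : cs.length (cs.simple i * w) < cs.length w
        · rw [if_pos hcond, add_zero]
        · rw [if_neg hcond, add_zero]
      · intro z hz
        rw [hcoeff z] at hz
        by_cases h1 : Hb.repr (d (Hb u)) (cs.simple i * z) = 0
        · by_cases h2 : Hb.repr (d (Hb u)) z = 0
          · exfalso
            rw [h1, h2, mul_zero, mul_zero, add_zero, zero_add] at hz
            by_cases hcond : cs.length (cs.simple i * z) < cs.length z
            · rw [if_pos hcond] at hz; exact hz rfl
            · rw [if_neg hcond] at hz; exact hz rfl
          · rcases hDu.2 z h2 with h | h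
            · right; rw [h]; omega
            · right; omega
        · rcases hDu.2 (cs.simple i * z) h1 with h | h
          · left
            rw [← hsw, ← h, cs.simple_mul_simple_cancel_left]
          · right
            rcases cs.length_simple_mul z i with h3 | h3 <;> omega
  -- core uniqueness
  have uniq0 : ∀ E : HH, d E = E → (∀ z : W, ∀ n : ℤ, n ≤ 0 → (Hb.repr E z).coeff n = 0) →
      E = 0 := by
    intro E hdE hP
    by_contra hne
    have hrne : Hb.repr E ≠ 0 := fun h =>
      hne (by rw [← Hb.linearCombination_repr E, h, map_zero])
    have hsupp : (Hb.repr E).support.Nonempty := by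
      rw [Finsupp.support_nonempty_iff]; exact hrne
    obtain ⟨z₀, hz₀mem, hz₀max⟩ :=
      Finset.exists_max_image (Hb.repr E).support (fun z => cs.length z) hsupp
    have hz₀ : Hb.repr E z₀ ≠ 0 := Finsupp.mem_support_iff.mp hz₀mem
    have hEq : Hb.repr (d E) z₀ = LaurentPolynomial.invert (Hb.repr E z₀) := by
      rw [repr_d E z₀, Finsupp.sum]
      rw [Finset.sum_eq_single z₀]
      · rw [(stepA z₀).1, mul_one]
      · intro x hx hxne
        have hr : Hb.repr (d (Hb x)) z₀ = 0 := by
          by_contra hr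
          rcases (stepA x).2 z₀ hr with h | h
          · exact hxne h.symm
          · exact absurd (hz₀max x hx) (by omega)
        rw [hr, mul_zero]
      · intro h
        exact absurd hz₀mem h
    rw [hdE] at hEq
    exact hz₀ (KLaux4.invert_eq_self_pos _ (hP z₀) hEq.symm)
  -- existence of the KL family
  have exGood : ∀ w : W, ∃ Cw : HH, KLaux5.GoodKL cs Hb d w Cw := by
    suffices h : ∀ (n : ℕ) (w : W), cs.length w = n →
        ∃ Cw, KLaux5.GoodKL cs Hb d w Cw from fun w => h _ w rfl
    intro n
    induction n using Nat.strong_induction_on with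
    | _ n IHn =>
    intro w hw
    rcases Nat.eq_zero_or_pos n with hn | hn
    · subst hn
      have hw1 : w = 1 := cs.length_eq_zero_iff.mp hw
      subst hw1
      refine ⟨1, by rw [map_one], ?_, ?_, ?_⟩
      · rw [← Hb_one, Hb.repr_self, Finsupp.single_apply, if_pos rfl]
      · intro z hz
        by_cases hz1 : z = 1
        · subst hz1; exact KLaux3.cle_refl cs 1
        · exfalso
          rw [← Hb_one, Hb.repr_self, Finsupp.single_apply,
            if_neg (fun h => hz1 h.symm)] at hz
          exact hz rfl
      · intro z hzne k hk
        rw [← Hb_one, Hb.repr_self, Finsupp.single_apply, if_neg (fun h => hzne h.symm)]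
        rfl
    · have hwne : w ≠ 1 := by
        intro h
        rw [h, cs.length_one] at hw
        omega
      obtain ⟨i, hdesc⟩ := cs.exists_leftDescent_of_ne_one hwne
      set u : W := cs.simple i * w with hu
      have hsw : cs.simple i * u = w := by rw [hu, cs.simple_mul_simple_cancel_left]
      have hlu : cs.length u + 1 = cs.length w := by
        rcases cs.length_simple_mul u i with h1 | h1
        · rw [hsw] at h1; omega
        · rw [hsw] at h1
          have : cs.length u < cs.length w := hdesc
          omega
      have hsu : cs.length (cs.simple i * u) = cs.length u + 1 := by rw [hsw]; omega
      obtain ⟨Cfull, hCfull⟩ : ∃ Cf : W → HH, ∀ z, cs.length z < n →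
          KLaux5.GoodKL cs Hb d z (Cf z) := by
        choose f hf using fun (z : {z : W // cs.length z < n}) =>
          IHn (cs.length z.1) z.2 z.1 rfl
        exact ⟨fun z => if h : cs.length z < n then f ⟨z, h⟩ else 0,
          fun z h => by simpa [dif_pos h] using hf ⟨z, h⟩⟩
      have hun : cs.length u < n := by omega
      obtain ⟨du1, du2, du3, du4⟩ := hCfull u hun
      set Cu : HH := Cfull u with hCu
      set E : HH := Hb (cs.simple i) * Cu + (T 1 : LaurentPolynomial ℤ) • Cu with hE
      have hErepr : ∀ z : W, Hb.repr E z
          = Hb.repr Cu (cs.simple i * z)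
            + (if cs.length (cs.simple i * z) < cs.length z
               then (T (-1) - T 1 : LaurentPolynomial ℤ) * Hb.repr Cu z else 0)
            + T 1 * Hb.repr Cu z := by
        intro z
        rw [hE, map_add, map_smul, Finsupp.add_apply, Finsupp.smul_apply, smul_eq_mul,
          hreprMul i Cu z]
      have hCuW : Hb.repr Cu w = 0 := by
        by_contra hne
        have := KLaux3.cle_length cs (du3 w hne)
        omega
      have hEw : Hb.repr E w = 1 := by
        rw [hErepr w, ← hu, du2, hCuW, mul_zero, mul_zero, ite_self, add_zero, add_zero]
      have hEsupp : ∀ z, Hb.repr E z ≠ 0 → KLaux3.cle cs z w := by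
        intro z hz
        have hor : Hb.repr Cu (cs.simple i * z) ≠ 0 ∨ Hb.repr Cu z ≠ 0 := by
          by_contra hcon
          push_neg at hcon
          apply hz
          rw [hErepr z, hcon.1, hcon.2, mul_zero, mul_zero, ite_self, add_zero, add_zero]
        rcases hor with h | h
        · have h2 := (KLaux3.cle_mul_simple cs hsu (du3 _ h)).2
          rw [cs.simple_mul_simple_cancel_left, hsw] at h2
          exact h2
        · have h2 := (KLaux3.cle_mul_simple cs hsu (du3 _ h)).1
          rw [hsw] at h2
          exact h2
      have hEQ : ∀ z, z ≠ w → ∀ k : ℤ, k < 0 → (Hb.repr E z).coeff k = 0 := by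
        intro z hne k hk
        rw [hErepr z, AddMonoidAlgebra.coeff_add, AddMonoidAlgebra.coeff_add, Finsupp.add_apply,
          Finsupp.add_apply]
        have ht1 : (Hb.repr Cu (cs.simple i * z)).coeff k = 0 := by
          have hne2 : cs.simple i * z ≠ u := by
            intro hc
            apply hne
            have h3 : z = cs.simple i * u := by
              rw [← hc, cs.simple_mul_simple_cancel_left]
            rw [h3, hsw]
          exact du4 _ hne2 k (by omega)
        have ht2 : ((if cs.length (cs.simple i * z) < cs.length z
            then (T (-1) - T 1 : LaurentPolynomial ℤ) * Hb.repr Cu z else 0) : LaurentPolynomial ℤ).coeff k = 0 := by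
          by_cases hcond : cs.length (cs.simple i * z) < cs.length z
          · rw [if_pos hcond]
            by_cases hzu : z = u
            · exfalso
              rw [hzu] at hcond
              omega
            · have hp := du4 z hzu
              rw [sub_mul, AddMonoidAlgebra.coeff_sub, Finsupp.sub_apply, KLaux4.T_mul_coeff, KLaux4.T_mul_coeff,
                hp (k - -1) (by omega), hp (k - 1) (by omega), sub_zero]
          · rw [if_neg hcond]
            rfl
        have ht3 : ((T 1 * Hb.repr Cu z : LaurentPolynomial ℤ)).coeff k = 0 := by
          rw [KLaux4.T_mul_coeff]
          by_cases hzu : z = u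
          · rw [hzu, du2, KLaux4.one_coeff, if_neg (by omega)]
          · exact du4 z hzu (k - 1) (by omega)
        rw [ht1, ht2, ht3, add_zero, add_zero]
      set S : Finset W := ((Hb.repr E).support).erase w with hS
      have hSmem : ∀ z ∈ S, z ≠ w ∧ Hb.repr E z ≠ 0 := by
        intro z hz
        exact ⟨Finset.ne_of_mem_erase hz,
          Finsupp.mem_support_iff.mp (Finset.mem_of_mem_erase hz)⟩
      have hSlt : ∀ z ∈ S, cs.length z < n := by
        intro z hz
        obtain ⟨h1, h2⟩ := hSmem z hz
        have := KLaux3.cle_length_lt cs (hEsupp z h2) h1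
        omega
      set F : HH := E - ∑ z ∈ S, (LaurentPolynomial.C ((Hb.repr E z).coeff 0)) • Cfull z with hF
      have hFrepr : ∀ x : W, Hb.repr F x = Hb.repr E x
          - ∑ z ∈ S, LaurentPolynomial.C ((Hb.repr E z).coeff 0) * Hb.repr (Cfull z) x := by
        intro x
        rw [hF, map_sub, map_sum, Finsupp.sub_apply]
        congr 1
        rw [Finset.sum_apply']
        exact Finset.sum_congr rfl fun z hz => by
          rw [map_smul, Finsupp.smul_apply, smul_eq_mul]
      refine ⟨F, ?_, ?_, ?_, ?_⟩
      · have hdE : d E = E := by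
          rw [hE, map_add, map_mul, d_Hs i, d_semilinear, du1, invert_T, add_mul,
            smul_mul_assoc, one_mul, add_assoc, ← add_smul]
          have h9 : (T 1 - T (-1) + T (-1) : LaurentPolynomial ℤ) = T 1 := by ring
          rw [h9]
        rw [hF, map_sub, hdE, map_sum]
        congr 1
        refine Finset.sum_congr rfl fun z hz => ?_
        rw [d_semilinear, LaurentPolynomial.invert_C, (hCfull z (hSlt z hz)).1]
      · rw [hFrepr w, hEw]
        have h8 : ∀ z ∈ S, LaurentPolynomial.C ((Hb.repr E z).coeff 0) * Hb.repr (Cfull z) w = 0 := by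
          intro z hz
          have hz0 : Hb.repr (Cfull z) w = 0 := by
            by_contra hc
            have h1 := (hCfull z (hSlt z hz)).2.2.1 w hc
            have h2 := KLaux3.cle_length cs h1
            have := hSlt z hz
            omega
          rw [hz0, mul_zero]
        rw [Finset.sum_congr rfl h8, Finset.sum_const_zero, sub_zero]
      · intro z hz
        by_contra hcle
        apply hz
        rw [hFrepr z]
        have h1 : Hb.repr E z = 0 := by
          by_contra hc; exact hcle (hEsupp z hc)
        have h2 : ∀ x ∈ S, LaurentPolynomial.C ((Hb.repr E x).coeff 0) * Hb.repr (Cfull x) z = 0 := by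
          intro x hx
          have hz0 : Hb.repr (Cfull x) z = 0 := by
            by_contra hc
            have hcz := (hCfull x (hSlt x hx)).2.2.1 z hc
            have hcx := hEsupp x (hSmem x hx).2
            exact hcle (KLaux3.cle_trans cs hcz hcx)
          rw [hz0, mul_zero]
        rw [h1, Finset.sum_congr rfl h2, Finset.sum_const_zero, sub_zero]
      · intro z hne k hk
        rw [hFrepr z, AddMonoidAlgebra.coeff_sub, Finsupp.sub_apply]
        rcases lt_or_eq_of_le hk with hklt | hk0
        · rw [hEQ z hne k hklt]
          have h2 : ∀ x ∈ S,
              ((LaurentPolynomial.C ((Hb.repr E x).coeff 0) * Hb.repr (Cfull x) z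
                : LaurentPolynomial ℤ)).coeff k = 0 := by
            intro x hx
            rw [KLaux4.C_mul_coeff]
            by_cases hzx : z = x
            · rw [hzx, (hCfull x (hSlt x hx)).2.1, KLaux4.one_coeff, if_neg (by omega),
                mul_zero]
            · rw [(hCfull x (hSlt x hx)).2.2.2 z hzx k hk, mul_zero]
          have h3 : ((∑ x ∈ S, LaurentPolynomial.C ((Hb.repr E x).coeff 0) * Hb.repr (Cfull x) z
              : LaurentPolynomial ℤ)).coeff k = 0 := by
            rw [AddMonoidAlgebra.coeff_sum, Finset.sum_apply']
            exact Finset.sum_eq_zero h2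
          rw [h3, sub_zero]
        · subst hk0
          have hsum : ((∑ x ∈ S, LaurentPolynomial.C ((Hb.repr E x).coeff 0) * Hb.repr (Cfull x) z
              : LaurentPolynomial ℤ)).coeff 0
              = if z ∈ S then (Hb.repr E z).coeff 0 else 0 := by
            rw [AddMonoidAlgebra.coeff_sum, Finset.sum_apply']
            by_cases hzS : z ∈ S
            · rw [if_pos hzS, Finset.sum_eq_single z]
              · rw [KLaux4.C_mul_coeff, (hCfull z (hSlt z hzS)).2.1, KLaux4.one_coeff,
                  if_pos rfl, mul_one]
              · intro x hx hxz
                rw [KLaux4.C_mul_coeff,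
                  (hCfull x (hSlt x hx)).2.2.2 z (fun hc => hxz hc.symm) 0 le_rfl, mul_zero]
              · intro h; exact absurd hzS h
            · rw [if_neg hzS]
              apply Finset.sum_eq_zero
              intro x hx
              have hzx : z ≠ x := fun hc => hzS (by rw [hc]; exact hx)
              rw [KLaux4.C_mul_coeff, (hCfull x (hSlt x hx)).2.2.2 z hzx 0 le_rfl, mul_zero]
          rw [hsum]
          by_cases hzS : z ∈ S
          · rw [if_pos hzS, sub_self]
          · rw [if_neg hzS, sub_zero]
            have h5 : Hb.repr E z = 0 := by
              by_contra hc
              exact hzS (Finset.mem_erase.mpr ⟨hne, Finsupp.mem_support_iff.mpr hc⟩)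
            rw [h5]
            rfl
  -- choose the family and finish
  choose Cfun hCfun using exGood
  set φ : HH →ₗ[LaurentPolynomial ℤ] HH := Hb.constr ℕ Cfun with hφ
  have hφb : ∀ x : W, φ (Hb x) = Cfun x := fun x => Hb.constr_basis ℕ Cfun x
  have hφsum : ∀ E : HH, φ E = (Hb.repr E).sum fun x c => c • Cfun x := by
    intro E
    conv_lhs => rw [← Hb.linearCombination_repr E]
    rw [Finsupp.linearCombination_apply, map_finsuppSum]
    exact Finsupp.sum_congr fun x hx => by rw [map_smul, hφb x]
  have hker : ∀ E : HH, φ E = 0 → E = 0 := by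
    intro E hE0
    by_contra hne
    have hrne : Hb.repr E ≠ 0 := fun h =>
      hne (by rw [← Hb.linearCombination_repr E, h, map_zero])
    obtain ⟨z₀, hz₀mem, hz₀max⟩ := Finset.exists_max_image (Hb.repr E).support
      (fun z => cs.length z) (Finsupp.support_nonempty_iff.mpr hrne)
    have h0 : Hb.repr (φ E) z₀ = Hb.repr E z₀ := by
      rw [hφsum E, map_finsuppSum, Finsupp.sum_apply, Finsupp.sum,
        Finset.sum_eq_single z₀]
      · rw [map_smul, Finsupp.smul_apply, (hCfun z₀).2.1, smul_eq_mul, mul_one]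
      · intro x hx hxne
        rw [map_smul, Finsupp.smul_apply]
        have hz0 : Hb.repr (Cfun x) z₀ = 0 := by
          by_contra hc
          have h1 := (hCfun x).2.2.1 z₀ hc
          have h2 := KLaux3.cle_eq_of_length_le cs h1 (hz₀max x hx)
          exact hxne h2.symm
        rw [hz0, smul_zero]
      · intro h; exact absurd hz₀mem h
    rw [hE0, map_zero, Finsupp.zero_apply] at h0
    exact (Finsupp.mem_support_iff.mp hz₀mem) h0.symm
  have hinj : Function.Injective φ := by
    intro a b hab
    have h1 : a - b = 0 := hker _ (by rw [map_sub, hab, sub_self])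
    exact sub_eq_zero.mp h1
  have hrange : ∀ x : W, Hb x ∈ LinearMap.range φ := by
    suffices h : ∀ (m : ℕ) (x : W), cs.length x = m → Hb x ∈ LinearMap.range φ from
      fun x => h _ x rfl
    intro m
    induction m using Nat.strong_induction_on with
    | _ m IHm =>
    intro x hx
    have h1 : (Hb.repr (Cfun x)).sum (fun y c => c • Hb y) = Cfun x := by
      conv_rhs => rw [← Hb.linearCombination_repr (Cfun x),
        Finsupp.linearCombination_apply]
    have hxmem : x ∈ (Hb.repr (Cfun x)).support :=
      Finsupp.mem_support_iff.mpr (by rw [(hCfun x).2.1]; exact one_ne_zero)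
    have h2 : (Hb.repr (Cfun x)).sum (fun y c => c • Hb y)
        = (∑ y ∈ (Hb.repr (Cfun x)).support.erase x, Hb.repr (Cfun x) y • Hb y)
          + Hb x := by
      rw [Finsupp.sum, ← Finset.sum_erase_add _ _ hxmem]
      congr 1
      rw [(hCfun x).2.1, one_smul]
    have h4 : (∑ y ∈ (Hb.repr (Cfun x)).support.erase x, Hb.repr (Cfun x) y • Hb y)
        + Hb x = Cfun x := h2.symm.trans h1
    have h3 : Hb x = Cfun x
        - ∑ y ∈ (Hb.repr (Cfun x)).support.erase x, Hb.repr (Cfun x) y • Hb y := by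
      exact eq_sub_of_add_eq' h4
    rw [h3]
    apply Submodule.sub_mem
    · exact ⟨Hb x, hφb x⟩
    · apply Submodule.sum_mem
      intro y hy
      apply Submodule.smul_mem
      obtain ⟨hyne, hymem⟩ := Finset.mem_erase.mp hy
      have hcy := (hCfun x).2.2.1 y (Finsupp.mem_support_iff.mp hymem)
      have hlen := KLaux3.cle_length_lt cs hcy hyne
      exact IHm (cs.length y) (by omega) y rfl
  have hsurj : Function.Surjective φ := by
    rw [← LinearMap.range_eq_top, eq_top_iff, ← Hb.span_eq, Submodule.span_le]
    rintro v ⟨x, rfl⟩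
    exact hrange x
  refine ⟨Cfun, ⟨⟨Hb.map (LinearEquiv.ofBijective φ ⟨hinj, hsurj⟩), fun z => ?_⟩,
    fun z => (hCfun z).1, fun z => (hCfun z).2.1, ?_, ?_⟩, ?_⟩
  · rw [Module.Basis.map_apply]
    exact hφb z
  · intro v x hxu hne0
    exact ⟨KLaux5.bruhatLE_of_cle cs ((hCfun v).2.2.1 x hne0), hxu⟩
  · intro v x hxu k hk
    exact (hCfun v).2.2.2 x hxu k hk
  · intro C' hC'
    obtain ⟨_, hC1, hC2, hC3, hC4⟩ := hC'
    funext v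
    have hsub : C' v - Cfun v = 0 := by
      apply uniq0
      · rw [map_sub, hC1 v, (hCfun v).1]
      · intro z k hk
        rw [map_sub, Finsupp.sub_apply, AddMonoidAlgebra.coeff_sub, Finsupp.sub_apply]
        by_cases hzw : z = v
        · subst hzw
          rw [hC2 z, (hCfun z).2.1]
          exact sub_self _
        · rw [hC4 v z hzw k hk, (hCfun v).2.2.2 z hzw k hk, sub_zero]
    exact sub_eq_zero.mp hsub
end

section
/- Let w ∈ W, s ∈ S with sw < w, and x ∈ W with x < w. Then the Kazhdan–Lusztig polynomials satisfy: h_{x,w} = v h_{x,sw} + h_{sx,sw} − Σ_{sz < z < sw} μ(z,sw) h_{x,z} if x < sx, and h_{x,w} = v⁻¹ h_{x,sw} + h_{sx,sw} − Σ_{sz < z < sw} μ(z,sw) h_{x,z} if x > sx. -/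
/-!
# Statement 3: The recursive formula for Kazhdan–Lusztig polynomials

Let `w ∈ W`, `s ∈ S` with `sw < w`, and `x < w`.  Then
`h_{x,w} = v h_{x,sw} + h_{sx,sw} − Σ_{sz<z<sw} μ(z,sw) h_{x,z}` if `x < sx`, and
`h_{x,w} = v⁻¹ h_{x,sw} + h_{sx,sw} − Σ_{sz<z<sw} μ(z,sw) h_{x,z}` if `x > sx`.
-/

open LaurentPolynomial

namespace KLAux
variable {B W : Type} [Group W] {M : CoxeterMatrix B} (cs : CoxeterSystem M W)

theorem length_lt_of_bruhatLT {x w : W} (h : cs.bruhatLT x w) : cs.length x < cs.length w := by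
  obtain ⟨⟨ω, hω, hw, φ, hsub, hφ, hx⟩, hne⟩ := h
  have h1 : cs.length x = φ.length := by rw [← hx]; exact hφ
  have h2 : cs.length w = ω.length := by rw [← hw]; exact hω
  have hle : φ.length ≤ ω.length := hsub.length_le
  rcases lt_or_eq_of_le hle with h | h
  · omega
  · exact absurd (by rw [← hx, ← hw, hsub.eq_of_length h]) hne

theorem bruhatLT_of_length_lt (i : B) (x : W)
    (h : cs.length (cs.simple i * x) < cs.length x) : cs.bruhatLT (cs.simple i * x) x := by
  obtain ⟨φ, hred, heq⟩ := cs.exists_reduced_word' (cs.simple i * x)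
  have hdich := cs.length_simple_mul x i
  have hlen : cs.length (cs.simple i * x) + 1 = cs.length x := by omega
  refine ⟨⟨i :: φ, ?_, ?_, φ, List.sublist_cons_self i φ, hred, heq.symm⟩, ?_⟩
  · show cs.length _ = _
    rw [cs.wordProd_cons, ← heq, cs.simple_mul_simple_cancel_left]
    simp only [List.length_cons]
    rw [← hlen]
    have : cs.length (cs.simple i * x) = φ.length := by rw [heq]; exact hred
    omega
  · rw [cs.wordProd_cons, ← heq, cs.simple_mul_simple_cancel_left]
  · intro hc
    exact cs.length_simple_mul_ne x i (by rw [hc])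

theorem bruhatLT_simple_iff (i : B) (x : W) :
    cs.bruhatLT (cs.simple i * x) x ↔ cs.length (cs.simple i * x) + 1 = cs.length x := by
  constructor
  · intro h
    have := length_lt_of_bruhatLT cs h
    have := cs.length_simple_mul x i
    omega
  · intro h
    exact bruhatLT_of_length_lt cs i x (by omega)

end KLAux


set_option maxHeartbeats 2000000 in
open scoped Classical in
theorem kl_polynomial_recursion
    {B W : Type} [Group W] {M : CoxeterMatrix B} (cs : CoxeterSystem M W)
    -- the Hecke algebra of (W,S), a ℤ[v,v⁻¹]-algebra
    (HH : Type) [Ring HH] [Algebra (LaurentPolynomial ℤ) HH]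
    -- its standard basis {H_w : w ∈ W}
    (Hb : Module.Basis W (LaurentPolynomial ℤ) HH)
    (Hb_one : Hb 1 = 1)
    (Hb_mul : ∀ (i : B) (u : W), cs.length (cs.simple i * u) = cs.length u + 1 →
      Hb (cs.simple i) * Hb u = Hb (cs.simple i * u))
    (Hb_mul' : ∀ (i : B) (u : W), cs.length (cs.simple i * u) + 1 = cs.length u →
      Hb (cs.simple i) * Hb u
        = Hb (cs.simple i * u) + ((T (-1) - T 1 : LaurentPolynomial ℤ)) • Hb u)
    -- the bar involution d of H
    (d : HH →+* HH)
    (d_invol : Function.Involutive d)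
    (d_semilinear : ∀ (p : LaurentPolynomial ℤ) (a : HH),
      d (p • a) = (LaurentPolynomial.invert p) • d a)
    (d_H : ∀ u : W, d (Hb u) * Hb u⁻¹ = 1 ∧ Hb u⁻¹ * d (Hb u) = 1)
    -- the Kazhdan–Lusztig basis {H̱_w}; the Kazhdan–Lusztig polynomial h_{x,w}
    -- is the coordinate (Hb.repr (C w)) x, and μ(x,w) is its coefficient of v
    (C : W → HH)
    (Cb : Module.Basis W (LaurentPolynomial ℤ) HH) (hCb : ∀ u : W, Cb u = C u)
    (C_bar : ∀ u : W, d (C u) = C u)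
    (C_self : ∀ u : W, Hb.repr (C u) u = 1)
    (C_supp : ∀ u x : W, x ≠ u → Hb.repr (C u) x ≠ 0 → cs.bruhatLT x u)
    (C_pos : ∀ u x : W, x ≠ u → ∀ n : ℤ, n ≤ 0 → (Hb.repr (C u) x).coeff n = 0)
    -- the data of the statement: w ∈ W, s ∈ S with sw < w, and x < w
    (w : W) (i : B) (hsw : cs.bruhatLT (cs.simple i * w) w)
    (x : W) (hxw : cs.bruhatLT x w) :
    -- if x < sx : h_{x,w} = v h_{x,sw} + h_{sx,sw} − Σ_{sz<z<sw} μ(z,sw) h_{x,z}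
    (cs.bruhatLT x (cs.simple i * x) →
      Hb.repr (C w) x
        = T 1 * Hb.repr (C (cs.simple i * w)) x
          + Hb.repr (C (cs.simple i * w)) (cs.simple i * x)
          - ∑ z ∈ ((Hb.repr (C (cs.simple i * w))).support.filter
              (fun z => cs.bruhatLT (cs.simple i * z) z)),
              ((Hb.repr (C (cs.simple i * w)) z).coeff 1) • Hb.repr (C z) x) ∧
    -- if x > sx : h_{x,w} = v⁻¹ h_{x,sw} + h_{sx,sw} − Σ_{sz<z<sw} μ(z,sw) h_{x,z}
    (cs.bruhatLT (cs.simple i * x) x →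
      Hb.repr (C w) x
        = T (-1) * Hb.repr (C (cs.simple i * w)) x
          + Hb.repr (C (cs.simple i * w)) (cs.simple i * x)
          - ∑ z ∈ ((Hb.repr (C (cs.simple i * w))).support.filter
              (fun z => cs.bruhatLT (cs.simple i * z) z)),
              ((Hb.repr (C (cs.simple i * w)) z).coeff 1) • Hb.repr (C z) x) := by
  classical
  set s := cs.simple i with hs
  have hcan : ∀ u : W, s * (s * u) = u := fun u => cs.simple_mul_simple_cancel_left i
  -- sign function
  set e : W → ℤ := fun u => if cs.length (s * u) = cs.length u + 1 then 1 else -1 with he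
  set Cs : HH := Hb s + (T 1 : LaurentPolynomial ℤ) • 1 with hCs
  -- multiplication rule
  have hmul : ∀ (x : W) (a : HH),
      Hb.repr (Cs * a) x = T (e x) * Hb.repr a x + Hb.repr a (s * x) := by
    intro x a
    let F : HH →ₗ[LaurentPolynomial ℤ] LaurentPolynomial ℤ :=
      (Finsupp.lapply x).comp (Hb.repr.toLinearMap.comp (LinearMap.mulLeft (LaurentPolynomial ℤ) Cs))
    let G : HH →ₗ[LaurentPolynomial ℤ] LaurentPolynomial ℤ :=
      (T (e x) : LaurentPolynomial ℤ) • ((Finsupp.lapply x).comp Hb.repr.toLinearMap)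
        + (Finsupp.lapply (s * x)).comp Hb.repr.toLinearMap
    have hFG : F = G := by
      apply Hb.ext
      intro u
      show Hb.repr (Cs * Hb u) x
          = T (e x) * Hb.repr (Hb u) x + Hb.repr (Hb u) (s * x)
      have hCsu : Cs * Hb u = Hb (s * u) + (T (e u) : LaurentPolynomial ℤ) • Hb u := by
        rcases cs.length_simple_mul u i with h | h
        · rw [← hs] at h
          have : e u = 1 := by simp [he, h]
          rw [this, hCs, add_mul, smul_mul_assoc, one_mul, hs, Hb_mul i u (by rw [← hs]; omega)]
          try rw [← hs]
        · rw [← hs] at h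
          have h2 : cs.length (s * u) ≠ cs.length u + 1 := by omega
          have : e u = -1 := by simp [he, h2]
          rw [this, hCs, add_mul, smul_mul_assoc, one_mul, hs, Hb_mul' i u (by rw [← hs]; omega)]
          rw [← hs, add_assoc, ← add_smul]
          ring_nf
      rw [hCsu]
      have r1 : ∀ (z y : W), (Hb.repr (Hb z)) y = if z = y then 1 else 0 := fun z y => by
        rw [Hb.repr_self]; exact Finsupp.single_apply
      simp only [map_add, map_smul, Finsupp.add_apply, Finsupp.smul_apply, r1, smul_eq_mul]
      have hsu : ¬ (s * u = u) := fun hc => cs.length_simple_mul_ne u i (by rw [← hs, hc])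
      by_cases hux : u = x
      · subst hux
        rw [if_pos rfl, if_neg hsu, if_neg (fun hh : u = s * u => hsu hh.symm)]
        ring
      · have h1 : s * u = x ↔ u = s * x := by
          constructor
          · intro hh; rw [← hh, hcan]
          · intro hh; rw [hh, hcan]
        rw [if_neg hux, mul_zero, mul_zero]
        by_cases h2 : s * u = x
        · rw [if_pos h2, if_pos (h1.mp h2)]; try ring
        · rw [if_neg h2, if_neg (fun hh => h2 (h1.mpr hh))]; try ring
    have := congrArg (fun f => f (a)) hFG
    simpa [F, G, smul_eq_mul] using this
  -- bar involution facts
  have hs_inv : s⁻¹ = s := by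
    rw [hs]; exact cs.inv_simple i
  have hss2 : Hb s * Hb s = Hb 1 + ((T (-1) - T 1 : LaurentPolynomial ℤ)) • Hb s := by
    have h1 : cs.length (cs.simple i * cs.simple i) + 1 = cs.length (cs.simple i) := by
      rw [cs.simple_mul_simple_self i, cs.length_one, cs.length_simple i]
    have := Hb_mul' i (cs.simple i) h1
    rw [cs.simple_mul_simple_self i] at this
    rw [hs]; exact this
  have dHs : d (Hb s) = Hb s + ((T 1 - T (-1) : LaurentPolynomial ℤ)) • (1 : HH) := by
    set y : HH := Hb s + ((T 1 - T (-1) : LaurentPolynomial ℤ)) • (1 : HH) with hy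
    have hsy : Hb s * y = 1 := by
      rw [hy, mul_add, hss2, Hb_one, mul_smul_comm, mul_one, add_assoc, ← add_smul]
      ring_nf
      simp
    have hds : d (Hb s) * Hb s = 1 := by
      have := (d_H s).1
      rwa [hs_inv] at this
    calc d (Hb s) = d (Hb s) * (Hb s * y) := by rw [hsy, mul_one]
    _ = (d (Hb s) * Hb s) * y := by rw [mul_assoc]
    _ = y := by rw [hds, one_mul]
  have dCs : d Cs = Cs := by
    rw [hCs, map_add, dHs, d_semilinear, map_one]
    rw [show (LaurentPolynomial.invert (T 1 : LaurentPolynomial ℤ)) = T (-1) by simp]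
    rw [add_assoc, ← add_smul]
    congr 1
    ring
  -- uniqueness lemma
  have uniq : ∀ E : HH, d E = E → (∀ (x : W) (n : ℤ), n ≤ 0 → (Hb.repr E x).coeff n = 0) → E = 0 := by
    intro E hdE hposE
    by_contra hE
    have hrepr : Cb.repr E ≠ 0 := fun hc => hE (by
      have := congrArg Cb.repr.symm hc
      simpa using this)
    obtain ⟨u, hu, hmax⟩ := Finset.exists_max_image (Cb.repr E).support (fun z => cs.length z)
      (Finsupp.support_nonempty_iff.mpr hrepr)
    set c : LaurentPolynomial ℤ := Cb.repr E u with hc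
    have hcne : c ≠ 0 := Finsupp.mem_support_iff.mp hu
    have hEsum : E = ∑ z ∈ (Cb.repr E).support, (Cb.repr E z) • C z := by
      conv_lhs => rw [← Cb.linearCombination_repr E]
      rw [Finsupp.linearCombination_apply, Finsupp.sum]
      exact Finset.sum_congr rfl (fun z _ => by rw [hCb])
    -- Claim 1 : Hb.repr E u = c
    have claim1 : Hb.repr E u = c := by
      rw [hEsum, map_sum, Finsupp.finset_sum_apply]
      rw [Finset.sum_eq_single u]
      · rw [map_smul, Finsupp.smul_apply, C_self, smul_eq_mul, mul_one]
      · intro z hz hzu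
        rw [map_smul, Finsupp.smul_apply]
        have : Hb.repr (C z) u = 0 := by
          by_contra hne
          have hlt := C_supp z u (fun hh => hzu hh.symm) hne
          have := KLAux.length_lt_of_bruhatLT cs hlt
          have := hmax z hz
          omega
        rw [this, smul_zero]
      · intro hun; exact absurd hu hun
    -- Claim 2 : invert c = c
    have claim2 : LaurentPolynomial.invert c = c := by
      have hdEsum : d E = ∑ z ∈ (Cb.repr E).support,
          (LaurentPolynomial.invert (Cb.repr E z)) • C z := by
        nth_rewrite 1 [hEsum]
        rw [map_sum]
        exact Finset.sum_congr rfl (fun z _ => by rw [d_semilinear, C_bar])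
      have h1 : Cb.repr (d E) u = LaurentPolynomial.invert c := by
        rw [hdEsum, map_sum, Finsupp.finset_sum_apply]
        rw [Finset.sum_eq_single u]
        · rw [← hCb, map_smul, Finsupp.smul_apply, Cb.repr_self, Finsupp.single_apply,
            if_pos rfl, smul_eq_mul, mul_one]
        · intro z hz hzu
          rw [← hCb, map_smul, Finsupp.smul_apply, Cb.repr_self, Finsupp.single_apply,
            if_neg hzu, smul_zero]
        · intro hun; exact absurd hu hun
      rw [hdE] at h1
      exact h1.symm
    -- conclude c = 0
    have : c = 0 := by
      ext n
      rcases le_or_gt n 0 with hn | hn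
      · rw [← claim1]; exact hposE u n hn
      · have h1 : c.coeff n = c.coeff (-n) := by
          conv_lhs => rw [← claim2]
          exact invert_apply c n
        rw [h1, ← claim1]
        exact hposE u (-n) (by omega)
    exact hcne this
  -- main assembly
  have hT : ∀ (m : ℤ) (p : LaurentPolynomial ℤ) (n : ℤ),
      ((T m * p : LaurentPolynomial ℤ)).coeff n = p.coeff (n - m) := by
    intro m p n; rw [T, AddMonoidAlgebra.coeff_single_mul_apply]; ring_nf
  have hone : ∀ n : ℤ, (1 : LaurentPolynomial ℤ).coeff n = if 0 = n then 1 else 0 := fun n => by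
    rw [AddMonoidAlgebra.one_def]; exact Finsupp.single_apply
  have hlsw : cs.length (s * w) + 1 = cs.length w := by
    have := (KLAux.bruhatLT_simple_iff cs i w).mp hsw
    rwa [← hs] at this
  set S0 := ((Hb.repr (C (s * w))).support.filter
      (fun z => cs.bruhatLT (s * z) z)) with hS0
  set X : HH := Cs * C (s * w)
      - ∑ z ∈ S0, ((Hb.repr (C (s * w)) z).coeff 1) • C z with hX
  have dX : d X = X := by
    rw [hX, map_sub, map_mul, dCs, C_bar]
    congr 1
    rw [map_sum]
    exact Finset.sum_congr rfl fun z _ => by rw [map_zsmul, C_bar]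
  have reprX : ∀ y : W, Hb.repr X y
      = T (e y) * Hb.repr (C (s * w)) y + Hb.repr (C (s * w)) (s * y)
        - ∑ z ∈ S0, ((Hb.repr (C (s * w)) z).coeff 1) • Hb.repr (C z) y := by
    intro y
    rw [hX, map_sub, Finsupp.sub_apply, hmul y (C (s * w)), map_sum,
      Finsupp.finset_sum_apply]
    congr 1
    exact Finset.sum_congr rfl fun z _ => by rw [map_zsmul, Finsupp.smul_apply]
  -- basic length facts
  have hwsw : w ≠ s * w := fun hc => cs.length_simple_mul_ne w i (by rw [← hs, ← hc])
  have hCw_sw : Hb.repr (C (s * w)) w = 0 := by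
    by_contra hne
    have := KLAux.length_lt_of_bruhatLT cs (C_supp (s * w) w hwsw hne)
    omega
  have hz_ne_w : ∀ z ∈ S0, z ≠ w := by
    intro z hz hc
    subst hc
    rw [hS0, Finset.mem_filter, Finsupp.mem_support_iff] at hz
    exact hz.1 hCw_sw
  have hz_desc : ∀ z ∈ S0, cs.length (s * z) + 1 = cs.length z := by
    intro z hz
    rw [hS0, Finset.mem_filter] at hz
    have := (KLAux.bruhatLT_simple_iff cs i z).mp hz.2
    rwa [← hs] at this
  -- the coefficient vanishing
  have reprE : ∀ y : W, Hb.repr (X - C w) y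
      = T (e y) * Hb.repr (C (s * w)) y + Hb.repr (C (s * w)) (s * y)
        - ∑ z ∈ S0, ((Hb.repr (C (s * w)) z).coeff 1) • Hb.repr (C z) y
        - Hb.repr (C w) y := by
    intro y
    rw [map_sub, Finsupp.sub_apply, reprX y]
  have hcoef : ∀ (y : W) (n : ℤ), n ≤ 0 → (Hb.repr (X - C w) y).coeff n = 0 := by
    intro y n hn
    rw [reprE y]
    show ((T (e y) * Hb.repr (C (s * w)) y : LaurentPolynomial ℤ)).coeff n
        + (Hb.repr (C (s * w)) (s * y)).coeff n
        - ((∑ z ∈ S0, ((Hb.repr (C (s * w)) z).coeff 1) • Hb.repr (C z) y :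
            LaurentPolynomial ℤ)).coeff n
        - (Hb.repr (C w) y).coeff n = 0
    rw [show ((∑ z ∈ S0, ((Hb.repr (C (s * w)) z).coeff 1) • Hb.repr (C z) y :
          LaurentPolynomial ℤ)).coeff n
        = ∑ z ∈ S0, (((Hb.repr (C (s * w)) z).coeff 1) • Hb.repr (C z) y).coeff n from
        by rw [AddMonoidAlgebra.coeff_sum, Finsupp.finset_sum_apply]]
    rw [hT]
    have smulc : ∀ (cz : ℤ) (p : LaurentPolynomial ℤ) (m : ℤ),
        ((cz • p : LaurentPolynomial ℤ)).coeff m = cz * p.coeff m := fun _ _ _ => rfl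
    by_cases hyw : y = w
    · subst hyw
      rw [hCw_sw, C_self, C_self, AddMonoidAlgebra.coeff_zero, Finsupp.zero_apply]
      rw [Finset.sum_eq_zero (fun z hz => by
        rw [smulc, C_pos z y (fun hc => hz_ne_w z hz hc.symm) n hn, mul_zero])]
      ring
    · have h4 : (Hb.repr (C w) y).coeff n = 0 := C_pos w y hyw n hn
      have hsy_ne : s * y ≠ s * w := fun hc => hyw (mul_left_cancel hc)
      have h2 : (Hb.repr (C (s * w)) (s * y)).coeff n = 0 := C_pos _ _ hsy_ne n hn
      have hdich := cs.length_simple_mul y i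
      rw [← hs] at hdich
      rw [h2, h4]
      by_cases hdesc : cs.length (s * y) + 1 = cs.length y
      · -- e y = -1
        have hey : e y = -1 := by
          have hc : ¬ (cs.length (s * y) = cs.length y + 1) := by omega
          simp [he, hc]
        have hysw : y ≠ s * w := by
          intro hc
          rw [hc, hcan w] at hdesc
          omega
        rw [hey]
        by_cases hyS : y ∈ S0
        · rw [Finset.sum_eq_single_of_mem y hyS (fun z hz hzy => by
            rw [smulc, C_pos z y (fun hc => hzy hc.symm) n hn, mul_zero])]
          rw [smulc, C_self]
          rcases lt_or_eq_of_le hn with hn0 | hn0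
          · rw [C_pos (s * w) y hysw (n - -1) (by omega)]
            rw [hone, if_neg (by omega), mul_zero]
            ring
          · subst hn0
            rw [hone, if_pos rfl, mul_one]
            norm_num
        · have hy0 : Hb.repr (C (s * w)) y = 0 := by
            by_contra hne
            apply hyS
            rw [hS0, Finset.mem_filter, Finsupp.mem_support_iff]
            refine ⟨hne, ?_⟩
            have := KLAux.bruhatLT_of_length_lt cs i y (by rw [← hs]; omega)
            rwa [← hs] at this
          rw [hy0, AddMonoidAlgebra.coeff_zero, Finsupp.zero_apply]
          rw [Finset.sum_eq_zero (fun z hz => by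
            rw [smulc, C_pos z y (fun hc => (hyS (hc ▸ hz))) n hn, mul_zero])]
          ring
      · -- e y = 1
        have hl1 : cs.length (s * y) = cs.length y + 1 := by omega
        have hey : e y = 1 := by simp [he, hl1]
        rw [hey]
        have hA : (Hb.repr (C (s * w)) y).coeff (n - 1) = 0 := by
          by_cases hysw : y = s * w
          · rw [hysw, C_self, hone, if_neg (by omega)]
          · exact C_pos _ _ hysw (n - 1) (by omega)
        rw [hA]
        rw [Finset.sum_eq_zero (fun z hz => by
          have hzy : y ≠ z := by
            intro hc
            have := hz_desc z hz
            rw [← hc] at this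
            omega
          rw [smulc, C_pos z y hzy n hn, mul_zero])]
        ring
  -- conclude X = C w
  have hXCw : X = C w := by
    have hE : X - C w = 0 := by
      apply uniq
      · rw [map_sub, dX, C_bar]
      · intro y n hn
        exact hcoef y n hn
    exact sub_eq_zero.mp hE
  have final : ∀ y : W, Hb.repr (C w) y
      = T (e y) * Hb.repr (C (s * w)) y + Hb.repr (C (s * w)) (s * y)
        - ∑ z ∈ S0, ((Hb.repr (C (s * w)) z).coeff 1) • Hb.repr (C z) y := by
    intro y
    rw [← hXCw]
    exact reprX y
  -- conclusion
  constructor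
  · intro hlt
    have hll := KLAux.length_lt_of_bruhatLT cs hlt
    have hdich := cs.length_simple_mul x i
    rw [← hs] at hdich
    have hex : e x = 1 := by
      have hc : cs.length (s * x) = cs.length x + 1 := by omega
      simp [he, hc]
    have := final x
    rw [hex] at this
    exact this
  · intro hlt
    have hll := KLAux.length_lt_of_bruhatLT cs hlt
    have hdich := cs.length_simple_mul x i
    rw [← hs] at hdich
    have hex : e x = -1 := by
      have hc : ¬ (cs.length (s * x) = cs.length x + 1) := by omega
      simp [he, hc]
    have := final x
    rw [hex] at this
    exact this
end
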